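/- Let p be prime, 0 ≤ L < L+N < p, and ℓ, k ≥ 1 integers, and let K ≥ 1 be an integer with L+N+K < p. Then ∑_{a=0}^{p−1} |S_a(L,N)|^{2ℓ} ≤ C · (N^{2ℓ} K^{−ℓ} + N^{2ℓ−1} K + K^{2ℓ}) · p, where S_a(L,N) = ∑_{n=L+1}^{L+N} e(a n!/p) and C depends only on ℓ. -/

import Mathlib

/-- `Ssum p a L N = ∑_{n=L+1}^{L+N} e(a n!/p)`. -/
noncomputable def Ssum (p a L N : ℕ) : ℂ :=
  ∑ n ∈ Finset.Icc (L + 1) (L + N),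
    Complex.exp (2 * Real.pi * Complex.I * ((a : ℤ) * (Nat.factorial n : ℤ)) / p)

open Finset Polynomial

open Finset

noncomputable def ep (p : ℕ) (m : ℤ) : ℂ :=
  Complex.exp (2 * Real.pi * Complex.I * m / p)

lemma ep_abs (p : ℕ) (m : ℤ) : ‖ep p m‖ = 1 := by
  rw [ep, Complex.norm_exp]
  have : (2 * Real.pi * Complex.I * m / p).re = 0 := by
    simp [Complex.div_re, Complex.mul_re, Complex.mul_im]
  rw [this, Real.exp_zero]

lemma ep_prod {ι : Type*} (p : ℕ) (s : Finset ι) (m : ι → ℤ) :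
    ∏ i ∈ s, ep p (m i) = ep p (∑ i ∈ s, m i) := by
  simp only [ep]
  rw [← Complex.exp_sum]
  congr 1
  rw [← Finset.sum_div]
  congr 1
  push_cast
  rw [← Finset.mul_sum]

lemma ep_conj (p : ℕ) (m : ℤ) : (starRingEnd ℂ) (ep p m) = ep p (-m) := by
  rw [ep, ep, ← Complex.exp_conj]
  congr 1
  simp [Complex.conj_I, map_ofNat]

lemma ep_mul (p : ℕ) (m m' : ℤ) : ep p m * ep p m' = ep p (m + m') := by
  have := ep_prod p (s := ({0,1} : Finset ℕ)) (m := fun i => if i = 0 then m else m')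
  simpa using this

lemma ep_pow (p : ℕ) (m : ℤ) (a : ℕ) : ep p m ^ a = ep p (a * m) := by
  induction a with
  | zero => simp [ep]
  | succ n ih =>
    rw [pow_succ, ih, ep_mul]
    congr 1
    push_cast
    ring

lemma ep_p_mul {p : ℕ} (hp : 0 < p) (c : ℤ) : ep p ((p : ℤ) * c) = 1 := by
  rw [ep, Complex.exp_eq_one_iff]
  refine ⟨c, ?_⟩
  have hp' : (p : ℂ) ≠ 0 := by exact_mod_cast hp.ne'
  field_simp
  push_cast
  ring

lemma ep_orth {p : ℕ} (hp : 0 < p) (t : ℤ) :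
    ∑ a ∈ range p, ep p (a * t) = if (p : ℤ) ∣ t then (p : ℂ) else 0 := by
  have hkey : ∀ a : ℕ, ep p ((a : ℤ) * t) = (ep p t) ^ a := fun a => (ep_pow p t a).symm
  simp only [hkey]
  by_cases hdvd : (p : ℤ) ∣ t
  · rw [if_pos hdvd]
    obtain ⟨c, rfl⟩ := hdvd
    have h1 : ep p ((p : ℤ) * c) = 1 := ep_p_mul hp c
    simp [h1]
  · rw [if_neg hdvd]
    have hne : ep p t ≠ 1 := by
      intro h
      rw [ep, Complex.exp_eq_one_iff] at h
      obtain ⟨n, hn⟩ := h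
      have hp' : (p : ℂ) ≠ 0 := by exact_mod_cast hp.ne'
      have h2 : (2 * Real.pi * Complex.I) ≠ 0 := by
        simp [Real.pi_ne_zero, Complex.I_ne_zero]
      have h3 : (t : ℂ) = n * p := by
        field_simp at hn
        have h5 : 2 * (Real.pi:ℂ) * Complex.I * t = 2 * Real.pi * Complex.I * ((n:ℂ) * p) := by
          linear_combination (2 * (Real.pi:ℂ) * Complex.I) * hn
        exact mul_left_cancel₀ h2 h5
      have h4 : t = n * p := by exact_mod_cast h3
      exact hdvd ⟨n, by linarith⟩
    rw [geom_sum_eq hne]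
    have hp1 : ep p t ^ p = 1 := by
      rw [ep_pow]
      exact ep_p_mul hp t
    rw [hp1]
    simp



lemma moment {p : ℕ} (hp : 0 < p) (l : ℕ) (s : Finset ℕ) (f : ℕ → ℤ) :
    ∑ a ∈ range p, ‖∑ k ∈ s, ep p ((a : ℤ) * f k)‖ ^ (2 * l)
      = (p : ℝ) * ((((Fintype.piFinset fun _ : Fin l => s) ×ˢ
            (Fintype.piFinset fun _ : Fin l => s)).filter
          (fun gh => (p : ℤ) ∣ ((∑ i, f (gh.1 i)) - ∑ i, f (gh.2 i)))).card : ℝ) := by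
  have key : ∀ a : ℕ, (‖∑ k ∈ s, ep p ((a : ℤ) * f k)‖ ^ (2 * l) : ℂ)
      = ∑ gh ∈ ((Fintype.piFinset fun _ : Fin l => s) ×ˢ (Fintype.piFinset fun _ : Fin l => s)),
          ep p ((a : ℤ) * ((∑ i, f (gh.1 i)) - ∑ i, f (gh.2 i))) := by
    intro a
    set z : ℂ := ∑ k ∈ s, ep p ((a : ℤ) * f k) with hz
    have h1 : (‖z‖ ^ (2 * l) : ℂ) = z ^ l * (starRingEnd ℂ) z ^ l := by
      rw [← mul_pow, Complex.mul_conj]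
      rw [show (2 * l) = l * 2 by ring, pow_mul, ← pow_mul, mul_comm l 2, pow_mul]
      norm_cast
      rw [Complex.sq_norm]
    have h2 : z ^ l = ∑ g ∈ (Fintype.piFinset fun _ : Fin l => s),
        ep p ((a : ℤ) * ∑ i, f (g i)) := by
      rw [hz, ← Fin.prod_const l z]
      rw [Finset.prod_univ_sum]
      refine Finset.sum_congr rfl fun g _ => ?_
      rw [ep_prod]
      congr 1
      rw [Finset.mul_sum]
    have h3 : (starRingEnd ℂ) z ^ l = ∑ h ∈ (Fintype.piFinset fun _ : Fin l => s),
        ep p (-((a : ℤ) * ∑ i, f (h i))) := by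
      rw [hz, map_sum]
      have : ∀ k, (starRingEnd ℂ) (ep p ((a : ℤ) * f k)) = ep p (-((a:ℤ) * f k)) :=
        fun k => ep_conj p _
      simp only [this]
      rw [← Fin.prod_const l (∑ k ∈ s, ep p (-((a:ℤ) * f k))), Finset.prod_univ_sum]
      refine Finset.sum_congr rfl fun h _ => ?_
      rw [ep_prod]
      congr 1
      rw [Finset.mul_sum, ← Finset.sum_neg_distrib]
    rw [h1, h2, h3, Finset.sum_mul_sum, Finset.sum_product]
    refine Finset.sum_congr rfl fun g _ => Finset.sum_congr rfl fun h _ => ?_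
    rw [ep_mul]
    congr 1
    ring
  have main : ((∑ a ∈ range p, ‖∑ k ∈ s, ep p ((a : ℤ) * f k)‖ ^ (2 * l) : ℝ) : ℂ)
      = ((p : ℝ) * ((((Fintype.piFinset fun _ : Fin l => s) ×ˢ
            (Fintype.piFinset fun _ : Fin l => s)).filter
          (fun gh => (p : ℤ) ∣ ((∑ i, f (gh.1 i)) - ∑ i, f (gh.2 i)))).card : ℝ) : ℂ) := by
    push_cast
    simp only [key]
    rw [Finset.sum_comm]
    have : ∀ gh ∈ ((Fintype.piFinset fun _ : Fin l => s) ×ˢ (Fintype.piFinset fun _ : Fin l => s)),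
        ∑ a ∈ range p, ep p ((a : ℤ) * ((∑ i, f (gh.1 i)) - ∑ i, f (gh.2 i)))
        = if (p : ℤ) ∣ ((∑ i, f (gh.1 i)) - ∑ i, f (gh.2 i)) then (p : ℂ) else 0 :=
      fun gh _ => ep_orth hp _
    rw [Finset.sum_congr rfl this, Finset.sum_ite, Finset.sum_const, Finset.sum_const_zero,
      add_zero, nsmul_eq_mul]
    ring
  exact_mod_cast main
open Finset Polynomial

-- factorial identity
lemma fact_shift (n k : ℕ) : (n + k).factorial = n.factorial * ∏ i ∈ Icc 1 k, (n + i) := by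
  induction k with
  | zero => simp
  | succ k ih =>
    have : Icc 1 (k+1) = insert (k+1) (Icc 1 k) := by
      ext x; simp [Finset.mem_Icc]; omega
    rw [this, Finset.prod_insert (by simp), show n + (k+1) = (n + k) + 1 by ring,
      Nat.factorial_succ, ih]
    ring

section polyP
variable {p : ℕ} [Fact p.Prime]

noncomputable def Ppoly (p : ℕ) (k : ℕ) : Polynomial (ZMod p) :=
  ∏ i ∈ Icc 1 k, (X + C (i : ZMod p))

lemma Ppoly_monic (k : ℕ) : (Ppoly p k).Monic :=
  monic_prod_of_monic _ _ (fun i _ => monic_X_add_C _)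

lemma Ppoly_natDegree (k : ℕ) : (Ppoly p k).natDegree = k := by
  rw [Ppoly, natDegree_prod _ _ (fun i _ => (monic_X_add_C _).ne_zero)]
  have h : ∀ i ∈ Icc 1 k, (X + C (i : ZMod p)).natDegree = 1 := fun i _ => natDegree_X_add_C _
  rw [Finset.sum_congr rfl h, Finset.sum_const, smul_eq_mul, mul_one, Nat.card_Icc]
  omega

lemma Ppoly_eval (k n : ℕ) :
    (Ppoly p k).eval (n : ZMod p) = ((∏ i ∈ Icc 1 k, (n + i) : ℕ) : ZMod p) := by
  rw [Ppoly, eval_prod]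
  push_cast
  simp

end polyP

/-- Tuples with equal fiber cardinalities differ by a permutation. -/
lemma exists_perm_of_fiber_card_eq {l : ℕ} (g h : Fin l → ℕ)
    (hc : ∀ d : ℕ, (univ.filter fun i => g i = d).card = (univ.filter fun i => h i = d).card) :
    ∃ σ : Equiv.Perm (Fin l), g = h ∘ σ := by
  have e : ∀ d : ℕ, {i : Fin l // g i = d} ≃ {i : Fin l // h i = d} := by
    intro d
    apply Fintype.equivOfCardEq
    rw [Fintype.card_subtype, Fintype.card_subtype]
    exact hc d
  refine ⟨((Equiv.sigmaFiberEquiv g).symm.trans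
    ((Equiv.sigmaCongrRight e).trans (Equiv.sigmaFiberEquiv h))), ?_⟩
  funext i
  simp only [Function.comp_apply, Equiv.trans_apply]
  have h1 : (Equiv.sigmaFiberEquiv g).symm i = ⟨g i, ⟨i, rfl⟩⟩ := rfl
  rw [h1]
  have h2 : (Equiv.sigmaCongrRight e) ⟨g i, ⟨i, rfl⟩⟩ = ⟨g i, e (g i) ⟨i, rfl⟩⟩ := rfl
  rw [h2]
  exact ((e (g i) ⟨i, rfl⟩).2).symm

/-- Monic polys of distinct degrees are independent (downward induction). -/
lemma lin_indep_P {R : Type*} [CommRing R] [Nontrivial R] (P : ℕ → Polynomial R)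
    (hP : ∀ k, (P k).Monic) (hdeg : ∀ k, (P k).natDegree = k) :
    ∀ M : ℕ, ∀ c : ℕ → R, (∑ d ∈ Icc 1 M, Polynomial.C (c d) * P d = 0) →
      ∀ d ∈ Icc 1 M, c d = 0 := by
  intro M
  induction M with
  | zero => intro c _ d hd; simp at hd
  | succ M ih =>
    intro c hsum d hd
    have htop : c (M + 1) = 0 := by
      have hco := congrArg (fun q => Polynomial.coeff q (M + 1)) hsum
      simp only [Polynomial.finset_sum_coeff, Polynomial.coeff_zero] at hco
      rw [Finset.sum_eq_single (M + 1)] at hco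
      · rw [Polynomial.coeff_C_mul] at hco
        have : (P (M+1)).coeff (M+1) = 1 := by
          have := (hP (M+1)).leadingCoeff
          rwa [Polynomial.leadingCoeff, hdeg] at this
        rwa [this, mul_one] at hco
      · intro b hb hbne
        rw [Polynomial.coeff_C_mul,
          Polynomial.coeff_eq_zero_of_natDegree_lt, mul_zero]
        rw [hdeg]
        simp at hb
        omega
      · intro hnot
        simp at hnot
    have hrest : ∑ d ∈ Icc 1 M, Polynomial.C (c d) * P d = 0 := by
      have : Icc 1 (M+1) = insert (M+1) (Icc 1 M) := by
        ext x; simp [Finset.mem_Icc]; omega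
      rw [this, Finset.sum_insert (by simp)] at hsum
      rwa [htop, map_zero, zero_mul, zero_add] at hsum
    rcases Finset.mem_Icc.mp hd with ⟨h1, h2⟩
    rcases Nat.lt_or_ge d (M+1) with hlt | hge
    · exact ih c hrest d (Finset.mem_Icc.mpr ⟨h1, by omega⟩)
    · have : d = M + 1 := by omega
      rw [this]; exact htop

section main
variable {p l : ℕ} [hpf : Fact p.Prime]

noncomputable def Qpoly (p l : ℕ) (g h : Fin l → ℕ) : Polynomial (ZMod p) :=
  (∑ i, Ppoly p (g i)) - ∑ i, Ppoly p (h i)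

/-- The congruence condition is equivalent to the polynomial vanishing. -/
lemma cond_iff (g h : Fin l → ℕ) (n : ℕ) (hn : n < p) :
    ((p : ℤ) ∣ ((∑ i, ((n + g i).factorial : ℤ)) - ∑ i, ((n + h i).factorial : ℤ)))
      ↔ (Qpoly p l g h).eval (n : ZMod p) = 0 := by
  rw [← ZMod.intCast_zmod_eq_zero_iff_dvd]
  push_cast
  have hfac : ∀ k : ℕ, (((n + k).factorial : ℕ) : ZMod p)
      = (n.factorial : ZMod p) * (Ppoly p k).eval (n : ZMod p) := by
    intro k
    rw [fact_shift n k, Ppoly_eval]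
    push_cast
    ring
  have hev : (Qpoly p l g h).eval (n : ZMod p)
      = (∑ i, (Ppoly p (g i)).eval (n : ZMod p)) - ∑ i, (Ppoly p (h i)).eval (n : ZMod p) := by
    rw [Qpoly, eval_sub, eval_finset_sum, eval_finset_sum]
  have hfnz : (n.factorial : ZMod p) ≠ 0 := by
    rw [Ne, ZMod.natCast_eq_zero_iff]
    intro hdvd
    exact absurd (hpf.out.dvd_factorial.mp hdvd) (by omega)
  constructor
  · intro hz
    rw [hev]
    have : ∀ i : Fin l, (((n + g i).factorial : ℕ) : ZMod p)
        = (n.factorial : ZMod p) * (Ppoly p (g i)).eval (n : ZMod p) := fun i => hfac _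
    simp only [hfac] at hz
    rw [← Finset.mul_sum, ← Finset.mul_sum, ← mul_sub] at hz
    rcases mul_eq_zero.mp hz with h' | h'
    · exact absurd h' hfnz
    · exact h'
  · intro hz
    simp only [hfac]
    rw [← Finset.mul_sum, ← Finset.mul_sum, ← mul_sub, hev.symm] at *
    rw [hz, mul_zero]

/-- Root-count bound for a nonzero Q. -/
lemma root_count (L N K : ℕ) (hLN : L + N < p) (Q : Polynomial (ZMod p)) (hQ : Q ≠ 0)
    (hdeg : Q.natDegree ≤ K) :
    ((Icc (L+1) (L+N)).filter (fun n : ℕ => Q.eval (n : ZMod p) = 0)).card ≤ K := by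
  classical
  set S := (Icc (L+1) (L+N)).filter (fun n : ℕ => Q.eval (n : ZMod p) = 0) with hS
  have hinj : Set.InjOn (fun n : ℕ => (n : ZMod p)) S := by
    intro a ha b hb hab
    have ha' : a < p := by
      have := Finset.mem_Icc.mp (Finset.mem_filter.mp ha).1; omega
    have hb' : b < p := by
      have := Finset.mem_Icc.mp (Finset.mem_filter.mp hb).1; omega
    exact ZMod.val_cast_of_lt ha' ▸ ZMod.val_cast_of_lt hb' ▸ congrArg ZMod.val hab
  have hcard : S.card = (S.image (fun n : ℕ => (n : ZMod p))).card :=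
    (Finset.card_image_of_injOn hinj).symm
  rw [hcard]
  have hsub : S.image (fun n : ℕ => (n : ZMod p)) ⊆ Q.roots.toFinset := by
    intro x hx
    rcases Finset.mem_image.mp hx with ⟨n, hn, rfl⟩
    rw [Multiset.mem_toFinset, Polynomial.mem_roots hQ]
    exact (Finset.mem_filter.mp hn).2
  calc (S.image _).card ≤ Q.roots.toFinset.card := Finset.card_le_card hsub
    _ ≤ Multiset.card Q.roots := Q.roots.toFinset_card_le
    _ ≤ Q.natDegree := Q.card_roots'
    _ ≤ K := hdeg

lemma Qpoly_natDegree_le (K : ℕ) (g h : Fin l → ℕ) (hg : ∀ i, g i ≤ K) (hh : ∀ i, h i ≤ K) :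
    (Qpoly p l g h).natDegree ≤ K := by
  apply le_trans (natDegree_sub_le _ _)
  apply max_le <;>
  · apply natDegree_sum_le_of_forall_le
    intro i _
    rw [Ppoly_natDegree]
    first | exact hg i | exact hh i

end main


section bad
variable {p l K : ℕ} [hpf : Fact p.Prime]

open scoped Classical in
/-- If `Qpoly = 0` and `p > 2 l`, the tuples agree up to permutation. -/
lemma perm_of_Qpoly_eq_zero (hp2l : 2 * l < p) (g h : Fin l → ℕ)
    (hg : ∀ i, g i ∈ Icc 1 K) (hh : ∀ i, h i ∈ Icc 1 K)
    (hQ : Qpoly p l g h = 0) : ∃ σ : Equiv.Perm (Fin l), g = h ∘ σ := by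
  have fib : ∀ f : Fin l → ℕ, (∀ i, f i ∈ Icc 1 K) →
      (∑ i, Ppoly p (f i))
        = ∑ d ∈ Icc 1 K, ((univ.filter fun i => f i = d).card : ℕ) • Ppoly p d := by
    intro f hf
    rw [← Finset.sum_fiberwise_of_maps_to (fun i _ => hf i) (fun i => Ppoly p (f i))]
    refine Finset.sum_congr rfl fun d _ => ?_
    rw [Finset.sum_congr rfl (fun i hi => by
      rw [(Finset.mem_filter.mp hi).2]), Finset.sum_const]
  have hzero : ∑ d ∈ Icc 1 K,
      Polynomial.C (((univ.filter fun i => g i = d).card : ZMod p)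
        - ((univ.filter fun i => h i = d).card : ZMod p)) * Ppoly p d = 0 := by
    have := hQ
    rw [Qpoly, fib g hg, fib h hh, ← Finset.sum_sub_distrib] at this
    rw [← this]
    refine Finset.sum_congr rfl fun d _ => ?_
    rw [map_sub, sub_mul]
    congr 1 <;> simp [Polynomial.C_eq_natCast, nsmul_eq_mul]
  have hcards : ∀ d ∈ Icc 1 K,
      (univ.filter fun i => g i = d).card = (univ.filter fun i => h i = d).card := by
    intro d hd
    have h0 := lin_indep_P (Ppoly p) (fun k => Ppoly_monic k) (fun k => Ppoly_natDegree k)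
      K _ hzero d hd
    have : (((univ.filter fun i => g i = d).card : ℕ) : ZMod p)
        = (((univ.filter fun i => h i = d).card : ℕ) : ZMod p) := by
      rwa [sub_eq_zero] at h0
    have hgl' : (univ.filter fun i => g i = d).card ≤ l := by
      refine le_trans (Finset.card_filter_le _ _) ?_
      simp
    have hhl' : (univ.filter fun i => h i = d).card ≤ l := by
      refine le_trans (Finset.card_filter_le _ _) ?_
      simp
    have hgl : (univ.filter fun i => g i = d).card < p := by omega
    have hhl : (univ.filter fun i => h i = d).card < p := by omega
    calc (univ.filter fun i => g i = d).card
        = (((univ.filter fun i => g i = d).card : ℕ) : ZMod p).val := (ZMod.val_cast_of_lt hgl).symm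
      _ = (((univ.filter fun i => h i = d).card : ℕ) : ZMod p).val := by rw [this]
      _ = _ := ZMod.val_cast_of_lt hhl
  apply exists_perm_of_fiber_card_eq
  intro d
  by_cases hd : d ∈ Icc 1 K
  · exact hcards d hd
  · have e1 : (univ.filter fun i => g i = d) = ∅ := by
      apply Finset.filter_eq_empty_iff.mpr
      intro i _ hgi
      exact hd (hgi ▸ hg i)
    have e2 : (univ.filter fun i => h i = d) = ∅ := by
      apply Finset.filter_eq_empty_iff.mpr
      intro i _ hhi
      exact hd (hhi ▸ hh i)
    rw [e1, e2]

open scoped Classical in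
lemma bad_count (hK : 1 ≤ K) (hKp : K < p) :
    (((Fintype.piFinset fun _ : Fin l => Icc 1 K) ×ˢ
        (Fintype.piFinset fun _ : Fin l => Icc 1 K)).filter
        (fun gh => Qpoly p l gh.1 gh.2 = 0)).card
      ≤ (l.factorial + (2 * l) ^ l) * K ^ l := by
  set T := (Fintype.piFinset fun _ : Fin l => Icc 1 K) with hT
  have hcardT : T.card = K ^ l := by
    rw [hT, Fintype.card_piFinset]
    simp [Nat.card_Icc]
  rcases le_or_gt p (2 * l) with hple | hplt
  · -- small p : use trivial bound
    calc ((T ×ˢ T).filter _).card ≤ (T ×ˢ T).card := Finset.card_filter_le _ _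
      _ = K ^ l * K ^ l := by rw [Finset.card_product, hcardT]
      _ ≤ (2 * l) ^ l * K ^ l := by
          apply Nat.mul_le_mul_right
          exact Nat.pow_le_pow_left (by omega) l
      _ ≤ (l.factorial + (2 * l) ^ l) * K ^ l := by
          apply Nat.mul_le_mul_right
          omega
  · -- large p : permutation argument
    have hsub : ((T ×ˢ T).filter (fun gh => Qpoly p l gh.1 gh.2 = 0))
        ⊆ ((T ×ˢ T).filter (fun gh => ∃ σ : Equiv.Perm (Fin l), gh.1 = gh.2 ∘ σ)) := by
      intro gh hgh
      rcases Finset.mem_filter.mp hgh with ⟨hmem, hQ⟩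
      rcases Finset.mem_product.mp hmem with ⟨h1, h2⟩
      refine Finset.mem_filter.mpr ⟨hmem, ?_⟩
      exact perm_of_Qpoly_eq_zero hplt gh.1 gh.2
        (fun i => Fintype.mem_piFinset.mp h1 i) (fun i => Fintype.mem_piFinset.mp h2 i) hQ
    apply le_trans (Finset.card_le_card hsub)
    have : ((T ×ˢ T).filter (fun gh => ∃ σ : Equiv.Perm (Fin l), gh.1 = gh.2 ∘ σ)).card
        = ∑ h ∈ T, (T.filter (fun g => ∃ σ : Equiv.Perm (Fin l), g = h ∘ σ)).card := by
      rw [Finset.card_filter, Finset.sum_product_right]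
      refine Finset.sum_congr rfl fun h _ => ?_
      rw [Finset.card_filter]
    rw [this]
    have hinner : ∀ h : Fin l → ℕ,
        (T.filter (fun g => ∃ σ : Equiv.Perm (Fin l), g = h ∘ σ)).card ≤ l.factorial := by
      intro h
      have hsub2 : T.filter (fun g => ∃ σ : Equiv.Perm (Fin l), g = h ∘ σ)
          ⊆ (univ : Finset (Equiv.Perm (Fin l))).image (fun σ : Equiv.Perm (Fin l) => h ∘ ⇑σ) := by
        intro g hg
        rcases Finset.mem_filter.mp hg with ⟨_, σ, hσ⟩
        exact Finset.mem_image.mpr ⟨σ, Finset.mem_univ _, hσ.symm⟩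
      calc _ ≤ ((univ : Finset (Equiv.Perm (Fin l))).image (fun σ : Equiv.Perm (Fin l) => h ∘ ⇑σ)).card :=
            Finset.card_le_card hsub2
        _ ≤ (univ : Finset (Equiv.Perm (Fin l))).card := Finset.card_image_le
        _ = l.factorial := by rw [Finset.card_univ, Fintype.card_perm, Fintype.card_fin]
    calc ∑ h ∈ T, (T.filter (fun g => ∃ σ : Equiv.Perm (Fin l), g = h ∘ σ)).card
        ≤ ∑ _h ∈ T, l.factorial := Finset.sum_le_sum (fun h _ => hinner h)
      _ = K ^ l * l.factorial := by rw [Finset.sum_const, smul_eq_mul, hcardT]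
      _ ≤ (l.factorial + (2 * l) ^ l) * K ^ l := by
          rw [mul_comm]
          apply Nat.mul_le_mul_right
          omega
end bad


open scoped Classical in
lemma total_count {p l L N K : ℕ} [hpf : Fact p.Prime] (hLN : L + N < p)
    (hK : 1 ≤ K) (hLNK : L + N + K < p) :
    ∑ n ∈ Icc (L+1) (L+N),
      ((((Fintype.piFinset fun _ : Fin l => Icc 1 K) ×ˢ
          (Fintype.piFinset fun _ : Fin l => Icc 1 K)).filter
        (fun gh => (p : ℤ) ∣ ((∑ i, ((n + gh.1 i).factorial : ℤ))
            - ∑ i, ((n + gh.2 i).factorial : ℤ)))).card)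
      ≤ (l.factorial + (2 * l) ^ l) * K ^ l * N + K ^ (2 * l + 1) := by
  set T := (Fintype.piFinset fun _ : Fin l => Icc 1 K) with hT
  have hcardT : T.card = K ^ l := by
    rw [hT, Fintype.card_piFinset]
    simp [Nat.card_Icc]
  -- swap the two sums
  have hswap : ∑ n ∈ Icc (L+1) (L+N),
      (((T ×ˢ T).filter (fun gh => (p : ℤ) ∣ ((∑ i, ((n + gh.1 i).factorial : ℤ))
          - ∑ i, ((n + gh.2 i).factorial : ℤ)))).card)
      = ∑ gh ∈ T ×ˢ T, (((Icc (L+1) (L+N)).filter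
          (fun n : ℕ => (p : ℤ) ∣ ((∑ i, ((n + gh.1 i).factorial : ℤ))
          - ∑ i, ((n + gh.2 i).factorial : ℤ)))).card) := by
    simp only [Finset.card_filter]
    rw [Finset.sum_comm]
  rw [hswap]
  -- replace the condition by the polynomial condition
  have hcond : ∀ gh ∈ T ×ˢ T, (((Icc (L+1) (L+N)).filter
        (fun n : ℕ => (p : ℤ) ∣ ((∑ i, ((n + gh.1 i).factorial : ℤ))
          - ∑ i, ((n + gh.2 i).factorial : ℤ)))).card)
      = (((Icc (L+1) (L+N)).filter
        (fun n : ℕ => (Qpoly p l gh.1 gh.2).eval (n : ZMod p) = 0)).card) := by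
    intro gh _
    congr 1
    apply Finset.filter_congr
    intro n hn
    have hnp : n < p := by
      have := Finset.mem_Icc.mp hn; omega
    exact cond_iff gh.1 gh.2 n hnp
  rw [Finset.sum_congr rfl hcond]
  -- split into Q = 0 and Q ≠ 0
  rw [← Finset.sum_filter_add_sum_filter_not (T ×ˢ T) (fun gh => Qpoly p l gh.1 gh.2 = 0)]
  have hbad : ∑ gh ∈ (T ×ˢ T).filter (fun gh => Qpoly p l gh.1 gh.2 = 0),
      (((Icc (L+1) (L+N)).filter
        (fun n : ℕ => (Qpoly p l gh.1 gh.2).eval (n : ZMod p) = 0)).card)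
      ≤ (l.factorial + (2 * l) ^ l) * K ^ l * N := by
    calc _ ≤ ∑ _gh ∈ (T ×ˢ T).filter (fun gh => Qpoly p l gh.1 gh.2 = 0), N := by
          apply Finset.sum_le_sum
          intro gh _
          calc _ ≤ (Icc (L+1) (L+N)).card := Finset.card_filter_le _ _
            _ = N := by rw [Nat.card_Icc]; omega
      _ = ((T ×ˢ T).filter (fun gh => Qpoly p l gh.1 gh.2 = 0)).card * N := by
          rw [Finset.sum_const, smul_eq_mul]
      _ ≤ (l.factorial + (2 * l) ^ l) * K ^ l * N := by
          apply Nat.mul_le_mul_right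
          exact bad_count hK (by omega)
  have hgood : ∑ gh ∈ (T ×ˢ T).filter (fun gh => ¬ Qpoly p l gh.1 gh.2 = 0),
      (((Icc (L+1) (L+N)).filter
        (fun n : ℕ => (Qpoly p l gh.1 gh.2).eval (n : ZMod p) = 0)).card)
      ≤ K ^ (2 * l + 1) := by
    calc _ ≤ ∑ _gh ∈ (T ×ˢ T).filter (fun gh => ¬ Qpoly p l gh.1 gh.2 = 0), K := by
          apply Finset.sum_le_sum
          intro gh hgh
          rcases Finset.mem_filter.mp hgh with ⟨hmem, hQne⟩
          rcases Finset.mem_product.mp hmem with ⟨h1, h2⟩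
          apply root_count L N K hLN _ hQne
          apply Qpoly_natDegree_le K
          · intro i
            exact (Finset.mem_Icc.mp (Fintype.mem_piFinset.mp h1 i)).2
          · intro i
            exact (Finset.mem_Icc.mp (Fintype.mem_piFinset.mp h2 i)).2
      _ = ((T ×ˢ T).filter (fun gh => ¬ Qpoly p l gh.1 gh.2 = 0)).card * K := by
          rw [Finset.sum_const, smul_eq_mul]
      _ ≤ (K ^ l * K ^ l) * K := by
          apply Nat.mul_le_mul_right
          calc _ ≤ (T ×ˢ T).card := Finset.card_filter_le _ _
            _ = K ^ l * K ^ l := by rw [Finset.card_product, hcardT]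
      _ = K ^ (2 * l + 1) := by ring
  omega



-- helper : (x+y)^m ≤ 2^m (x^m + y^m)
lemma add_pow_le_two_pow_mul {x y : ℝ} (hx : 0 ≤ x) (hy : 0 ≤ y) (m : ℕ) :
    (x + y) ^ m ≤ 2 ^ m * (x ^ m + y ^ m) := by
  have h1 : x + y ≤ 2 * max x y := by
    rcases le_total x y with h | h
    · rw [max_eq_right h]; linarith
    · rw [max_eq_left h]; linarith
  calc (x + y) ^ m ≤ (2 * max x y) ^ m :=
        pow_le_pow_left₀ (by positivity) h1 m
    _ = 2 ^ m * (max x y) ^ m := mul_pow _ _ _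
    _ ≤ 2 ^ m * (x ^ m + y ^ m) := by
        apply mul_le_mul_of_nonneg_left _ (by positivity)
        rcases le_total x y with h | h
        · rw [max_eq_right h]; nlinarith [pow_nonneg hx m]
        · rw [max_eq_left h]; nlinarith [pow_nonneg hy m]


lemma final_algebra (l : ℕ) (hl : 1 ≤ l) (x kk P B SW : ℝ)
    (hx : 0 ≤ x) (hkk : 0 < kk) (hP : 0 ≤ P) (hB : 1 ≤ B) (hSWnn : 0 ≤ SW)
    (hSW : SW ≤ x ^ (2*l-1) * (P * (B * kk ^ l * x + kk ^ (2*l+1)))) :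
    2 ^ (2*l) * (SW / kk ^ (2*l) + P * (2*kk) ^ (2*l))
      ≤ 2 ^ (2*l) * (B + 4 ^ l) * (x ^ (2*l) * (kk ^ l)⁻¹ + x ^ (2*l-1) * kk + kk ^ (2*l)) * P := by
  set u := x ^ (2*l-1) with hu
  set v := kk ^ l with hv
  have hvpos : 0 < v := pow_pos hkk l
  have hupos : 0 ≤ u := pow_nonneg hx _
  have hx2l : x ^ (2*l) = u * x := by
    rw [hu, ← pow_succ]; congr 1; omega
  have hk2l : kk ^ (2*l) = v * v := by
    rw [hv, ← pow_add]; congr 1; omega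
  have hk2l1 : kk ^ (2*l+1) = v * v * kk := by
    rw [hv, ← pow_add, ← pow_succ]; congr 1; omega
  have h2l4 : (2:ℝ) ^ (2*l) = 4 ^ l := by
    rw [pow_mul]; norm_num
  have h2kk : (2*kk) ^ (2*l) = 4 ^ l * (v * v) := by
    rw [mul_pow, hk2l, h2l4]
  set w := u * x / v with hw
  have hwpos : 0 ≤ w := by positivity
  have h4l : (1:ℝ) ≤ 4 ^ l := one_le_pow₀ (by norm_num)
  have hT : (0:ℝ) < 2 ^ (2*l) := by positivity
  have h1 : SW / (v * v) ≤ (u * (P * (B * v * x + v * v * kk))) / (v * v) := by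
    apply div_le_div_of_nonneg_right ?_ (by positivity)
    rw [← hk2l1]
    exact hSW
  have h2 : (u * (P * (B * v * x + v * v * kk))) / (v * v) = P * (B * w + u * kk) := by
    rw [hw]
    field_simp
  rw [hx2l, hk2l, h2kk]
  have hchain : 2 ^ (2*l) * (SW / (v*v) + P * (4 ^ l * (v*v)))
      ≤ 2 ^ (2*l) * (P * (B * w + u * kk) + P * (4 ^ l * (v*v))) := by
    apply mul_le_mul_of_nonneg_left _ (le_of_lt hT)
    apply add_le_add_left
    rw [← h2]
    exact h1
  apply le_trans hchain
  have hrhs : u * x * v⁻¹ = w := by rw [hw]; ring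
  rw [hrhs]
  have hB0 : (0:ℝ) ≤ B := le_trans zero_le_one hB
  have hF0 : (0:ℝ) ≤ 4 ^ l := by positivity
  have hukk : (0:ℝ) ≤ u * kk := mul_nonneg hupos hkk.le
  have hvv : (0:ℝ) ≤ v * v := mul_nonneg hvpos.le hvpos.le
  have core : P * (B * w + u * kk) + P * (4 ^ l * (v*v))
      ≤ (B + 4 ^ l) * (w + u * kk + v * v) * P := by
    nlinarith [mul_nonneg hB0 (mul_nonneg hP hvv), mul_nonneg hF0 (mul_nonneg hP hwpos),
      mul_nonneg hF0 (mul_nonneg hP hukk), mul_nonneg (sub_nonneg.mpr hB) (mul_nonneg hP hukk)]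
  calc 2 ^ (2*l) * (P * (B * w + u * kk) + P * (4 ^ l * (v*v)))
      ≤ 2 ^ (2*l) * ((B + 4 ^ l) * (w + u * kk + v * v) * P) :=
        mul_le_mul_of_nonneg_left core hT.le
    _ = 2 ^ (2*l) * (B + 4 ^ l) * (w + u * kk + v * v) * P := by ring

theorem stmt_19 (l : ℕ) (hl : 1 ≤ l) :
    ∃ C : ℝ, 0 < C ∧ ∀ (p L N K : ℕ), p.Prime →
      0 < N → L + N < p → 1 ≤ K → L + N + K < p →
      ∑ a ∈ Finset.range p, ‖Ssum p a L N‖ ^ (2 * l)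
        ≤ C * ((N : ℝ) ^ (2 * l) * (K : ℝ) ^ (-(l : ℝ))
            + (N : ℝ) ^ (2 * l - 1) * K + (K : ℝ) ^ (2 * l)) * p := by
  classical
  set B : ℝ := ((l.factorial + (2 * l) ^ l : ℕ) : ℝ) with hB
  have hB1 : 1 ≤ B := by
    rw [hB]
    have : 1 ≤ l.factorial + (2 * l) ^ l := le_trans l.factorial_pos (by omega)
    exact_mod_cast this
  refine ⟨2 ^ (2 * l) * (B + 4 ^ l), by positivity, ?_⟩
  intro p L N K hp hN hLN hK hLNK
  haveI : Fact p.Prime := ⟨hp⟩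
  have hppos : 0 < p := hp.pos
  set I := Finset.Icc (L + 1) (L + N) with hI
  have hIcard : I.card = N := by rw [hI, Nat.card_Icc]; omega
  set V : ℕ → ℕ → ℂ := fun a n => ∑ k ∈ Icc 1 K, ep p ((a : ℤ) * ((n + k).factorial : ℤ))
    with hV
  set W : ℕ → ℂ := fun a => ∑ n ∈ I, V a n with hW
  have hKR : (0 : ℝ) < K := by exact_mod_cast hK
  -- Ssum in terms of ep
  have hSsum : ∀ a : ℕ, Ssum p a L N = ∑ n ∈ I, ep p ((a : ℤ) * (n.factorial : ℤ)) := by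
    intro a
    rw [hI]
    unfold Ssum ep
    refine Finset.sum_congr rfl fun n _ => ?_
    norm_cast
  -- step 1 : shift bound
  have step1 : ∀ a : ℕ, ‖Ssum p a L N‖ ≤ ‖W a‖ / K + 2 * K := by
    intro a
    have hshift : ∀ k ∈ Icc 1 K,
        ‖Ssum p a L N - ∑ n ∈ I, ep p ((a : ℤ) * ((n + k).factorial : ℤ))‖
          ≤ 2 * K := by
      intro k hk
      rcases Finset.mem_Icc.mp hk with ⟨hk1, hk2⟩
      have hre : ∑ n ∈ I, ep p ((a : ℤ) * ((n + k).factorial : ℤ))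
          = ∑ m ∈ Icc (L + k + 1) (L + N + k), ep p ((a : ℤ) * (m.factorial : ℤ)) := by
        rw [show L + k + 1 = (L + 1) + k by ring, show L + N + k = (L + N) + k by ring,
          ← Finset.map_add_right_Icc, Finset.sum_map]
        simp [addRightEmbedding, hI]
      rw [hSsum a, hre, ← Finset.sum_sdiff_sub_sum_sdiff]
      set A := Icc (L + 1) (L + N) with hA
      set Bs := Icc (L + k + 1) (L + N + k) with hBs
      have habs : ∀ (s : Finset ℕ), ‖∑ m ∈ s, ep p ((a:ℤ) * (m.factorial : ℤ))‖
          ≤ s.card := by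
        intro s
        calc _ ≤ ∑ m ∈ s, ‖ep p ((a:ℤ) * (m.factorial : ℤ))‖ :=
              norm_sum_le _ _
          _ = s.card := by simp [ep_abs]
      have hc1 : (A \ Bs).card ≤ k := by
        have : A \ Bs ⊆ Icc (L + 1) (L + k) := by
          intro n hn
          rcases Finset.mem_sdiff.mp hn with ⟨hnA, hnB⟩
          rcases Finset.mem_Icc.mp hnA with ⟨h1, h2⟩
          rw [hBs, Finset.mem_Icc] at hnB
          rw [Finset.mem_Icc]
          omega
        calc _ ≤ (Icc (L+1) (L+k)).card := Finset.card_le_card this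
          _ = k := by rw [Nat.card_Icc]; omega
      have hc2 : (Bs \ A).card ≤ k := by
        have : Bs \ A ⊆ Icc (L + N + 1) (L + N + k) := by
          intro n hn
          rcases Finset.mem_sdiff.mp hn with ⟨hnB, hnA⟩
          rcases Finset.mem_Icc.mp hnB with ⟨h1, h2⟩
          rw [hA, Finset.mem_Icc] at hnA
          rw [Finset.mem_Icc]
          omega
        calc _ ≤ (Icc (L+N+1) (L+N+k)).card := Finset.card_le_card this
          _ = k := by rw [Nat.card_Icc]; omega
      calc ‖∑ m ∈ A \ Bs, ep p ((a:ℤ) * (m.factorial:ℤ))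
              - ∑ m ∈ Bs \ A, ep p ((a:ℤ) * (m.factorial:ℤ))‖
          ≤ ‖∑ m ∈ A \ Bs, ep p ((a:ℤ) * (m.factorial:ℤ))‖
            + ‖∑ m ∈ Bs \ A, ep p ((a:ℤ) * (m.factorial:ℤ))‖ := by
            apply norm_sub_le
        _ ≤ ((A \ Bs).card : ℝ) + ((Bs \ A).card : ℝ) := add_le_add (habs _) (habs _)
        _ ≤ (k : ℝ) + (k : ℝ) :=
            add_le_add (by exact_mod_cast hc1) (by exact_mod_cast hc2)
        _ ≤ 2 * K := by
            have : (k : ℝ) ≤ K := by exact_mod_cast hk2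
            linarith
    -- K * |S| ≤ |W| + 2K²
    have hsum : ∑ k ∈ Icc 1 K,
        (Ssum p a L N - ∑ n ∈ I, ep p ((a : ℤ) * ((n + k).factorial : ℤ)))
        = (K : ℕ) • Ssum p a L N - W a := by
      rw [Finset.sum_sub_distrib, Finset.sum_const, Nat.card_Icc]
      simp only [Nat.add_sub_cancel, hW, hV]
      congr 1
      rw [Finset.sum_comm]
    have hKS : (K : ℝ) * ‖Ssum p a L N‖ ≤ ‖W a‖ + 2 * K * K := by
      have heq : (K : ℕ) • Ssum p a L N = W a + ∑ k ∈ Icc 1 K,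
          (Ssum p a L N - ∑ n ∈ I, ep p ((a : ℤ) * ((n + k).factorial : ℤ))) := by
        rw [hsum]; ring
      have habs1 : ‖(K : ℕ) • Ssum p a L N‖ = K * ‖Ssum p a L N‖ := by
        rw [nsmul_eq_mul, norm_mul]
        simp
      calc (K : ℝ) * ‖Ssum p a L N‖ = ‖(K : ℕ) • Ssum p a L N‖ :=
            habs1.symm
        _ = ‖W a + ∑ k ∈ Icc 1 K,
            (Ssum p a L N - ∑ n ∈ I, ep p ((a : ℤ) * ((n + k).factorial : ℤ)))‖ := by rw [heq]
        _ ≤ ‖W a‖ + ‖∑ k ∈ Icc 1 K,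
            (Ssum p a L N - ∑ n ∈ I, ep p ((a : ℤ) * ((n + k).factorial : ℤ)))‖ :=
            norm_add_le _ _
        _ ≤ ‖W a‖ + ∑ k ∈ Icc 1 K, ‖Ssum p a L N - ∑ n ∈ I, ep p ((a : ℤ) * ((n + k).factorial : ℤ))‖ := by
            apply add_le_add_right
            exact norm_sum_le _ _
        _ ≤ ‖W a‖ + ∑ _k ∈ Icc 1 K, (2 * (K:ℝ)) := by
            apply add_le_add_right
            exact Finset.sum_le_sum hshift
        _ = ‖W a‖ + 2 * K * K := by
            rw [Finset.sum_const, Nat.card_Icc, nsmul_eq_mul]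
            have : (K + 1 - 1 : ℕ) = K := by omega
            rw [this]
            ring
    calc ‖Ssum p a L N‖ = ((K : ℝ) * ‖Ssum p a L N‖) / K := by
          field_simp
      _ ≤ (‖W a‖ + 2 * K * K) / K := by gcongr
      _ = ‖W a‖ / K + 2 * K := by field_simp
  -- step 2 : Hölder over n
  have hHolder : ∀ a : ℕ, ‖W a‖ ^ (2 * l)
      ≤ (N : ℝ) ^ (2 * l - 1) * ∑ n ∈ I, ‖V a n‖ ^ (2 * l) := by
    intro a
    calc ‖W a‖ ^ (2 * l)
        ≤ (∑ n ∈ I, ‖V a n‖) ^ (2 * l) := by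
          apply pow_le_pow_left₀ (norm_nonneg _)
          rw [hW]
          exact norm_sum_le _ _
      _ ≤ (I.card : ℝ) ^ (2 * l - 1) * ∑ n ∈ I, ‖V a n‖ ^ (2 * l) := by
          have h2l : 2 * l - 1 + 1 = 2 * l := by omega
          have := pow_sum_le_card_mul_sum_pow
            (s := I) (f := fun n => ‖V a n‖)
            (fun n _ => norm_nonneg _) (2 * l - 1)
          rwa [h2l] at this
      _ = (N : ℝ) ^ (2 * l - 1) * ∑ n ∈ I, ‖V a n‖ ^ (2 * l) := by
          rw [hIcard]
  -- step 3 : moment computation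
  set cnt : ℕ → ℕ := fun n => ((((Fintype.piFinset fun _ : Fin l => Icc 1 K) ×ˢ
        (Fintype.piFinset fun _ : Fin l => Icc 1 K)).filter
      (fun gh => (p : ℤ) ∣ ((∑ i, ((n + gh.1 i).factorial : ℤ))
          - ∑ i, ((n + gh.2 i).factorial : ℤ)))).card) with hcnt
  have hmom : ∀ n : ℕ, ∑ a ∈ range p, ‖V a n‖ ^ (2 * l)
      = (p : ℝ) * (cnt n : ℝ) := by
    intro n
    have := moment hppos l (Icc 1 K) (fun k => ((n + k).factorial : ℤ))
    rw [hV, hcnt]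
    exact this
  have hcntsum : ∑ n ∈ I, (cnt n : ℝ) ≤ B * K ^ l * N + (K:ℝ) ^ (2 * l + 1) := by
    have h := total_count (p := p) (l := l) hLN hK hLNK
    rw [hB]
    have := (Nat.cast_le (α := ℝ)).mpr h
    push_cast at this ⊢
    rw [hI]
    convert this using 2 <;> norm_num
  have hWsum : ∑ a ∈ range p, ‖W a‖ ^ (2 * l)
      ≤ (N : ℝ) ^ (2 * l - 1) * ((p : ℝ) * (B * K ^ l * N + (K:ℝ) ^ (2 * l + 1))) := by
    calc ∑ a ∈ range p, ‖W a‖ ^ (2 * l)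
        ≤ ∑ a ∈ range p, (N : ℝ) ^ (2 * l - 1) * ∑ n ∈ I, ‖V a n‖ ^ (2 * l) :=
          Finset.sum_le_sum (fun a _ => hHolder a)
      _ = (N : ℝ) ^ (2 * l - 1) * ∑ a ∈ range p, ∑ n ∈ I, ‖V a n‖ ^ (2 * l) := by
          rw [Finset.mul_sum]
      _ = (N : ℝ) ^ (2 * l - 1) * ∑ n ∈ I, ∑ a ∈ range p, ‖V a n‖ ^ (2 * l) := by
          rw [Finset.sum_comm]
      _ = (N : ℝ) ^ (2 * l - 1) * ∑ n ∈ I, (p : ℝ) * (cnt n : ℝ) := by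
          rw [Finset.sum_congr rfl (fun n _ => hmom n)]
      _ = (N : ℝ) ^ (2 * l - 1) * ((p : ℝ) * ∑ n ∈ I, (cnt n : ℝ)) := by
          rw [← Finset.mul_sum]
      _ ≤ (N : ℝ) ^ (2 * l - 1) * ((p : ℝ) * (B * K ^ l * N + (K:ℝ) ^ (2 * l + 1))) := by
          refine mul_le_mul_of_nonneg_left ?_ (by positivity)
          exact mul_le_mul_of_nonneg_left hcntsum (by positivity)
  -- step 4 : assemble
  have habsW : ∀ a : ℕ, (0:ℝ) ≤ ‖W a‖ / K := fun a => by positivity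
  have hfinal1 : ∑ a ∈ Finset.range p, ‖Ssum p a L N‖ ^ (2 * l)
      ≤ 2 ^ (2 * l) * ((∑ a ∈ range p, ‖W a‖ ^ (2 * l)) / (K:ℝ) ^ (2 * l)
          + (p : ℝ) * (2 * (K:ℝ)) ^ (2 * l)) := by
    calc ∑ a ∈ Finset.range p, ‖Ssum p a L N‖ ^ (2 * l)
        ≤ ∑ a ∈ range p, (‖W a‖ / K + 2 * K) ^ (2 * l) := by
          apply Finset.sum_le_sum
          intro a _
          exact pow_le_pow_left₀ (norm_nonneg _) (step1 a) _
      _ ≤ ∑ a ∈ range p, 2 ^ (2 * l) * ((‖W a‖ / K) ^ (2 * l)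
            + (2 * (K:ℝ)) ^ (2 * l)) := by
          apply Finset.sum_le_sum
          intro a _
          exact add_pow_le_two_pow_mul (habsW a) (by positivity) _
      _ = 2 ^ (2 * l) * ((∑ a ∈ range p, ‖W a‖ ^ (2 * l)) / (K:ℝ) ^ (2 * l)
          + (p : ℝ) * (2 * (K:ℝ)) ^ (2 * l)) := by
          rw [← Finset.mul_sum, Finset.sum_add_distrib, Finset.sum_const, Finset.card_range,
            nsmul_eq_mul, Finset.sum_div]
          congr 2
          refine Finset.sum_congr rfl fun a _ => ?_
          rw [div_pow]
  -- final algebra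
  have hrpow : (K:ℝ) ^ (-(l : ℝ)) = ((K:ℝ) ^ l)⁻¹ := by
    rw [Real.rpow_neg (by positivity), Real.rpow_natCast]
  rw [hrpow]
  have hSWnn : 0 ≤ ∑ a ∈ range p, ‖W a‖ ^ (2 * l) :=
    Finset.sum_nonneg fun a _ => by positivity
  exact le_trans hfinal1 (final_algebra l hl (N:ℝ) (K:ℝ) (p:ℝ) B _
    (by positivity) hKR (by positivity) hB1 hSWnn hWsum)
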